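/- arXiv:math/9310215 — 3 statements merged into one kernel-verified Lean document; each statement's English description precedes it below -/
import Mathlib

section
/- Let X be a real normed space and P : X → X a bounded linear projection (P ∘ P = P). Then ‖I − P‖ ≤ 1 if and only if for every x ∈ X and every norming functional x* for x (i.e. ‖x*‖ = 1 and x*(x) = ‖x‖), one has x*(P x) ≥ 0. -/
/-- A bounded linear projection `P` on a real normed space satisfies `‖I - P‖ ≤ 1`
iff `x*(Px) ≥ 0` for every `x` and every norming functional `x*` for `x`. -/
theorem stmt_0 (X : Type*) [NormedAddCommGroup X] [NormedSpace ℝ X]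
    (P : X →L[ℝ] X) (hP : P.comp P = P) :
    ‖(1 : X →L[ℝ] X) - P‖ ≤ 1 ↔
      ∀ (x : X) (f : X →L[ℝ] ℝ), ‖f‖ = 1 → f x = ‖x‖ → 0 ≤ f (P x) := by
  constructor
  · intro h x f hf hfx
    have h1 : ‖((1 : X →L[ℝ] X) - P) x‖ ≤ ‖x‖ := by
      calc ‖((1 : X →L[ℝ] X) - P) x‖ ≤ ‖(1 : X →L[ℝ] X) - P‖ * ‖x‖ :=
            ((1 : X →L[ℝ] X) - P).le_opNorm x
        _ ≤ 1 * ‖x‖ := by nlinarith [norm_nonneg x]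
        _ = ‖x‖ := one_mul _
    have h2 : f (x - P x) ≤ ‖x - P x‖ := by
      have := le_abs_self (f (x - P x))
      have h3 : |f (x - P x)| ≤ ‖f‖ * ‖x - P x‖ := by
        simpa [Real.norm_eq_abs] using f.le_opNorm (x - P x)
      rw [hf, one_mul] at h3
      linarith [le_abs_self (f (x - P x))]
    have h4 : ‖x - P x‖ ≤ ‖x‖ := by
      simpa [ContinuousLinearMap.sub_apply] using h1
    have : f (x - P x) = f x - f (P x) := by simp
    linarith [hfx ▸ (h2.trans h4)]
  · intro H
    -- key: for every x and t ∈ [0,1), ‖x - t • P x‖ ≤ ‖x‖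
    have key : ∀ (x : X) (t : ℝ), 0 ≤ t → t < 1 → ‖x - t • P x‖ ≤ ‖x‖ := by
      intro x t ht ht1
      by_cases hz : x - t • P x = 0
      · rw [hz, norm_zero]; exact norm_nonneg x
      · obtain ⟨f, hf1, hf2⟩ := exists_dual_vector ℝ (x - t • P x) (norm_ne_zero_iff.mpr hz)
        have hPPx : P (P x) = P x := by
          have := congrArg (fun q : X →L[ℝ] X => q x) hP
          simpa using this
        have hPz : P (x - t • P x) = (1 - t) • P x := by
          rw [map_sub, map_smul, hPPx, sub_smul, one_smul]
        have hpos : 0 ≤ f (P (x - t • P x)) := H _ f hf1 (by exact_mod_cast hf2)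
        rw [hPz, map_smul] at hpos
        have hfPx : 0 ≤ f (P x) := by
          have h1t : 0 < 1 - t := by linarith
          have : (0:ℝ) ≤ (1 - t) * f (P x) := by simpa using hpos
          nlinarith
        have hfx : f x = ‖x - t • P x‖ + t * f (P x) := by
          have : f (x - t • P x) = f x - t * f (P x) := by simp
          have hf2' : f (x - t • P x) = ‖x - t • P x‖ := by exact_mod_cast hf2
          linarith [hf2' ▸ this]
        have hfxle : f x ≤ ‖x‖ := by
          have h3 : |f x| ≤ ‖f‖ * ‖x‖ := by
            simpa [Real.norm_eq_abs] using f.le_opNorm x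
          rw [hf1, one_mul] at h3
          linarith [le_abs_self (f x)]
        nlinarith [mul_nonneg ht hfPx]
    refine ContinuousLinearMap.opNorm_le_bound _ zero_le_one (fun x => ?_)
    rw [one_mul]
    have hgoal : ‖x - P x‖ ≤ ‖x‖ := by
      refine le_of_forall_pos_le_add (fun ε hε => ?_)
      set δ : ℝ := min 1 (ε / (‖P x‖ + 1)) with hδ
      have hδpos : 0 < δ := lt_min one_pos (div_pos hε (by positivity))
      have hδ1 : δ ≤ 1 := min_le_left _ _
      have hδ2 : δ * ‖P x‖ ≤ ε := by
        have h1 : δ ≤ ε / (‖P x‖ + 1) := min_le_right _ _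
        have h2 : δ * ‖P x‖ ≤ (ε / (‖P x‖ + 1)) * ‖P x‖ :=
          mul_le_mul_of_nonneg_right h1 (norm_nonneg _)
        have h3 : (ε / (‖P x‖ + 1)) * ‖P x‖ ≤ ε := by
          rw [div_mul_eq_mul_div, div_le_iff₀ (by positivity)]
          nlinarith [norm_nonneg (P x)]
        linarith
      have h4 : ‖x - (1 - δ) • P x‖ ≤ ‖x‖ :=
        key x (1 - δ) (by linarith) (by linarith)
      have h5 : ‖x - P x‖ ≤ ‖x - (1 - δ) • P x‖ + δ * ‖P x‖ := by
        have : x - P x = (x - (1 - δ) • P x) + (-(δ • P x)) := by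
          rw [sub_smul, one_smul]; abel
        rw [this]
        calc ‖(x - (1 - δ) • P x) + (-(δ • P x))‖
            ≤ ‖x - (1 - δ) • P x‖ + ‖-(δ • P x)‖ := norm_add_le _ _
          _ = ‖x - (1 - δ) • P x‖ + δ * ‖P x‖ := by
              rw [norm_neg, norm_smul, Real.norm_eq_abs, abs_of_pos hδpos]
      linarith
    simpa [ContinuousLinearMap.sub_apply] using hgoal
end

section
/- Let μ be Lebesgue measure on [0,1] and let u : [0,1] → ℝ be measurable. If the set of functions {u ∘ σ : σ : [0,1] → [0,1] measure preserving} spans a finite-dimensional subspace of L⁰(μ) (measurable functions modulo a.e. equality), then u is constant a.e. -/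
open MeasureTheory Set

noncomputable def cdfS (S : Set ℝ) (x : ℝ) : ℝ := (volume (S ∩ Set.Iic x)).toReal

section CDF
variable {S : Set ℝ} (hS1 : S ⊆ Set.Icc 0 1)
include hS1

lemma vol_inter_ne_top (A : Set ℝ) : volume (S ∩ A) ≠ ⊤ :=
  ne_top_of_le_ne_top (by simp [Real.volume_Icc]) (measure_mono (fun x hx => hS1 hx.1))

lemma cdfS_mono : Monotone (cdfS S) := fun a b hab =>
  ENNReal.toReal_mono (vol_inter_ne_top hS1 _)
    (measure_mono (inter_subset_inter_right _ (Iic_subset_Iic.2 hab)))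

omit hS1 in
lemma cdfS_nonneg (x : ℝ) : 0 ≤ cdfS S x := ENNReal.toReal_nonneg

lemma vol_eq_ofReal_cdfS (x : ℝ) : volume (S ∩ Set.Iic x) = ENNReal.ofReal (cdfS S x) := by
  rw [cdfS, ENNReal.ofReal_toReal (vol_inter_ne_top hS1 _)]

lemma vol_S_ne_top : volume S ≠ ⊤ := by simpa using vol_inter_ne_top hS1 univ

lemma cdfS_le (x : ℝ) : cdfS S x ≤ (volume S).toReal :=
  ENNReal.toReal_mono (vol_S_ne_top hS1) (measure_mono inter_subset_left)

lemma cdfS_neg {x : ℝ} (hx : x < 0) : cdfS S x = 0 := by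
  have : S ∩ Set.Iic x = ∅ := by
    ext z; simp only [mem_inter_iff, mem_Iic, mem_empty_iff_false, iff_false]
    rintro ⟨hz, hzx⟩; exact absurd (le_trans (hS1 hz).1 hzx) (not_le.2 hx)
  simp [cdfS, this]

lemma cdfS_zero : cdfS S 0 = 0 := by
  have : volume (S ∩ Set.Iic 0) = 0 := by
    refine measure_mono_null (t := {(0:ℝ)}) (fun z hz => ?_) Real.volume_singleton
    exact le_antisymm hz.2 (hS1 hz.1).1
  simp [cdfS, this]

lemma cdfS_one : cdfS S 1 = (volume S).toReal := by
  have : S ∩ Set.Iic 1 = S := inter_eq_self_of_subset_left (fun z hz => (hS1 hz).2)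
  rw [cdfS, this]

lemma cdfS_add_le {x δ : ℝ} (hδ : 0 ≤ δ) : cdfS S (x + δ) ≤ cdfS S x + δ := by
  have hsub : S ∩ Set.Iic (x + δ) ⊆ (S ∩ Set.Iic x) ∪ Set.Ioc x (x + δ) := by
    rintro z ⟨hz, hzx⟩
    rcases le_or_gt z x with h | h
    · exact Or.inl ⟨hz, h⟩
    · exact Or.inr ⟨h, hzx⟩
  have h1 : volume (S ∩ Set.Iic (x + δ)) ≤ volume (S ∩ Set.Iic x) + ENNReal.ofReal δ := by
    calc volume (S ∩ Set.Iic (x + δ)) ≤ volume ((S ∩ Set.Iic x) ∪ Set.Ioc x (x + δ)) :=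
          measure_mono hsub
      _ ≤ volume (S ∩ Set.Iic x) + volume (Set.Ioc x (x + δ)) := measure_union_le _ _
      _ = volume (S ∩ Set.Iic x) + ENNReal.ofReal δ := by rw [Real.volume_Ioc]; ring_nf
  calc cdfS S (x + δ) ≤ (volume (S ∩ Set.Iic x) + ENNReal.ofReal δ).toReal :=
        ENNReal.toReal_mono (by simp [vol_inter_ne_top hS1]) h1
    _ = cdfS S x + δ := by
        rw [ENNReal.toReal_add (vol_inter_ne_top hS1 _) ENNReal.ofReal_ne_top,
          ENNReal.toReal_ofReal hδ]; rfl

lemma cdfS_lipschitz : LipschitzWith 1 (cdfS S) := by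
  apply LipschitzWith.of_dist_le_mul
  intro a b
  simp only [Real.dist_eq, NNReal.coe_one, ENNReal.coe_one, one_mul]
  rcases le_total a b with h | h
  · rw [abs_of_nonpos (by linarith [cdfS_mono hS1 h] : cdfS S a - cdfS S b ≤ 0),
      abs_of_nonpos (by linarith : a - b ≤ 0)]
    have h1 := cdfS_add_le hS1 (x := a) (δ := b - a) (by linarith)
    have h2 : a + (b - a) = b := by ring
    rw [h2] at h1; linarith
  · rw [abs_of_nonneg (by linarith [cdfS_mono hS1 h] : 0 ≤ cdfS S a - cdfS S b),
      abs_of_nonneg (by linarith : 0 ≤ a - b)]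
    have h1 := cdfS_add_le hS1 (x := b) (δ := a - b) (by linarith)
    have h2 : b + (a - b) = a := by ring
    rw [h2] at h1; linarith

lemma cdfS_continuous : Continuous (cdfS S) := (cdfS_lipschitz hS1).continuous

lemma cdfS_measurable : Measurable (cdfS S) := (cdfS_continuous hS1).measurable
end CDF

section MapCDF
variable {S : Set ℝ} (hS : MeasurableSet S) (hS1 : S ⊆ Set.Icc 0 1)
include hS hS1

/-- Pushforward of `volume` restricted to `S` under its CDF is uniform on `(0, volume S]`. -/
lemma map_cdfS : Measure.map (cdfS S) (volume.restrict S)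
    = volume.restrict (Set.Ioc 0 (volume S).toReal) := by
  set m : ℝ := (volume S).toReal with hm
  have hfin : IsFiniteMeasure (volume.restrict (Set.Ioc (0:ℝ) m)) :=
    ⟨by simp [Measure.restrict_apply, Real.volume_Ioc, ENNReal.ofReal_lt_top]⟩
  have hfin2 : IsFiniteMeasure (Measure.map (cdfS S) (volume.restrict S)) := by
    constructor
    rw [Measure.map_apply (cdfS_measurable hS1) MeasurableSet.univ]
    simpa [Measure.restrict_apply] using
      (lt_of_le_of_ne le_top (by simpa using vol_inter_ne_top hS1 Set.univ))
  refine Measure.ext_of_Iic _ _ (fun y => ?_)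
  rw [Measure.map_apply (cdfS_measurable hS1) measurableSet_Iic,
    Measure.restrict_apply (cdfS_measurable hS1 measurableSet_Iic),
    Measure.restrict_apply measurableSet_Iic]
  rcases lt_or_ge y 0 with hy | hy
  · have h1 : cdfS S ⁻¹' Set.Iic y ∩ S = ∅ := by
      ext z; simp only [Set.mem_inter_iff, Set.mem_preimage, Set.mem_Iic,
        Set.mem_empty_iff_false, iff_false]
      rintro ⟨h, _⟩; exact absurd (le_trans (cdfS_nonneg z) h) (not_le.2 hy)
    have h2 : Set.Iic y ∩ Set.Ioc 0 m = ∅ := by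
      ext z; simp only [Set.mem_inter_iff, Set.mem_Iic, Set.mem_Ioc,
        Set.mem_empty_iff_false, iff_false]
      rintro ⟨h, h0, _⟩; linarith
    rw [h1, h2]
  rcases lt_or_ge y m with hym | hym
  · -- 0 ≤ y < m
    set M : Set ℝ := {x ∈ Set.Icc (0:ℝ) 1 | cdfS S x ≤ y} with hM
    have hMne : M.Nonempty := ⟨0, ⟨le_refl 0, zero_le_one⟩, by rw [cdfS_zero hS1]; exact hy⟩
    have hMcl : IsClosed M := (isClosed_Icc.inter (isClosed_le (cdfS_continuous hS1) continuous_const))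
    have hMbdd : BddAbove M := ⟨1, fun z hz => hz.1.2⟩
    set xy : ℝ := sSup M with hxy
    have hxyM : xy ∈ M := hMcl.csSup_mem hMne hMbdd
    have hxy1 : xy ≤ 1 := hxyM.1.2
    have hcxy : cdfS S xy = y := by
      refine le_antisymm hxyM.2 ?_
      by_contra hlt
      push_neg at hlt
      have hxylt1 : xy < 1 := by
        rcases lt_or_eq_of_le hxy1 with h | h
        · exact h
        · exfalso; rw [h] at hlt; rw [cdfS_one hS1] at hlt; linarith
      set δ : ℝ := min ((y - cdfS S xy) / 2) (1 - xy) with hδ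
      have hδpos : 0 < δ := lt_min (by linarith) (by linarith)
      have hmem : xy + δ ∈ M := by
        refine ⟨⟨by linarith [hxyM.1.1], by
          have : δ ≤ 1 - xy := min_le_right _ _; linarith⟩, ?_⟩
        have h1 := cdfS_add_le hS1 (x := xy) (δ := δ) hδpos.le
        have h2 : δ ≤ (y - cdfS S xy) / 2 := min_le_left _ _
        linarith
      have := le_csSup hMbdd hmem
      linarith
    have hpre : cdfS S ⁻¹' Set.Iic y = Set.Iic xy := by
      ext z
      simp only [Set.mem_preimage, Set.mem_Iic]
      constructor
      · intro hz
        rcases le_or_gt z xy with h | h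
        · exact h
        by_contra _
        rcases le_or_gt z 1 with hz1 | hz1
        · have : max z 0 ∈ M := ⟨⟨le_max_right _ _, max_le hz1 zero_le_one⟩, by
            rcases le_or_gt 0 z with h0 | h0
            · rwa [max_eq_left h0]
            · rw [max_eq_right h0.le, cdfS_zero hS1]; exact hy⟩
          have h2 := le_csSup hMbdd this
          rcases le_or_gt 0 z with h0 | h0
          · rw [max_eq_left h0] at h2; linarith
          · have := hxyM.1.1; linarith
        · have hz2 : cdfS S z = m := by
            have ha : cdfS S z ≤ m := cdfS_le hS1 z
            have hb : m ≤ cdfS S z := by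
              rw [hm, ← cdfS_one hS1]; exact cdfS_mono hS1 hz1.le
            linarith
          rw [hz2] at hz; linarith
      · intro hz
        calc cdfS S z ≤ cdfS S xy := cdfS_mono hS1 hz
          _ = y := hcxy
    rw [hpre]
    have h1 : volume (Set.Iic xy ∩ S) = ENNReal.ofReal y := by
      rw [Set.inter_comm, vol_eq_ofReal_cdfS hS1, hcxy]
    have h2 : Set.Iic y ∩ Set.Ioc 0 m = Set.Ioc 0 y := by
      ext z; simp only [Set.mem_inter_iff, Set.mem_Iic, Set.mem_Ioc]
      constructor
      · rintro ⟨h, h0, _⟩; exact ⟨h0, h⟩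
      · rintro ⟨h0, h⟩; exact ⟨h, h0, by linarith⟩
    rw [h1, h2, Real.volume_Ioc, sub_zero]
  · -- m ≤ y
    have hpre : cdfS S ⁻¹' Set.Iic y = Set.univ := by
      ext z; simp only [Set.mem_preimage, Set.mem_Iic, Set.mem_univ, iff_true]
      exact le_trans (cdfS_le hS1 z) hym
    have h2 : Set.Iic y ∩ Set.Ioc 0 m = Set.Ioc 0 m := by
      refine Set.inter_eq_self_of_subset_right (fun z hz => le_trans hz.2 hym)
    rw [hpre, h2, Set.univ_inter, Real.volume_Ioc, sub_zero,
      ← ENNReal.ofReal_toReal (vol_S_ne_top hS1), hm]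
end MapCDF

noncomputable def qfS (T : Set ℝ) (y : ℝ) : ℝ :=
  sInf {x ∈ Set.Icc (0:ℝ) 1 | min y (volume T).toReal ≤ cdfS T x}

section QF
variable {T : Set ℝ} (hT : MeasurableSet T) (hT1 : T ⊆ Set.Icc 0 1)

lemma qfS_set_nonempty (hT1 : T ⊆ Set.Icc 0 1) (y : ℝ) :
    {x ∈ Set.Icc (0:ℝ) 1 | min y (volume T).toReal ≤ cdfS T x}.Nonempty :=
  ⟨1, ⟨zero_le_one, le_refl 1⟩, by rw [cdfS_one hT1]; exact min_le_right _ _⟩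

lemma qfS_set_bddBelow (y : ℝ) :
    BddBelow {x ∈ Set.Icc (0:ℝ) 1 | min y (volume T).toReal ≤ cdfS T x} :=
  ⟨0, fun z hz => hz.1.1⟩

include hT1 in
lemma qfS_mem (y : ℝ) : qfS T y ∈ {x ∈ Set.Icc (0:ℝ) 1 | min y (volume T).toReal ≤ cdfS T x} := by
  refine IsClosed.csInf_mem ?_ (qfS_set_nonempty hT1 y) (qfS_set_bddBelow y)
  exact isClosed_Icc.inter (isClosed_le continuous_const (cdfS_continuous hT1))

include hT1 in
lemma qfS_mem_Icc (y : ℝ) : qfS T y ∈ Set.Icc (0:ℝ) 1 := (qfS_mem hT1 y).1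

lemma qfS_mono (hT1 : T ⊆ Set.Icc 0 1) : Monotone (qfS T) := by
  intro a b hab
  refine csInf_le_csInf (qfS_set_bddBelow a) (qfS_set_nonempty hT1 b) (fun z hz => ?_)
  exact ⟨hz.1, le_trans (min_le_min_right _ hab) hz.2⟩

lemma qfS_measurable (hT1 : T ⊆ Set.Icc 0 1) : Measurable (qfS T) := (qfS_mono hT1).measurable

include hT1 in
lemma qfS_le_iff {y x : ℝ} (hy : 0 < y) (hym : y ≤ (volume T).toReal) :
    qfS T y ≤ x ↔ y ≤ cdfS T x := by
  have hmin : min y (volume T).toReal = y := min_eq_left hym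
  constructor
  · intro h
    have h1 : y ≤ cdfS T (qfS T y) := by
      have := (qfS_mem hT1 y).2; rwa [hmin] at this
    exact le_trans h1 (cdfS_mono hT1 h)
  · intro h
    rcases le_or_gt x 1 with hx1 | hx1
    · have hx0 : 0 ≤ x := by
        by_contra h0
        push_neg at h0
        rw [cdfS_neg hT1 h0] at h
        linarith
      exact csInf_le (qfS_set_bddBelow y) ⟨⟨hx0, hx1⟩, by rw [hmin]; exact h⟩
    · exact le_trans (qfS_mem_Icc hT1 y).2 hx1.le

include hT hT1 in
lemma map_qfS : Measure.map (qfS T) (volume.restrict (Set.Ioc 0 (volume T).toReal))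
    = volume.restrict T := by
  set m : ℝ := (volume T).toReal with hm
  have hfin : IsFiniteMeasure (volume.restrict (Set.Ioc (0:ℝ) m)) :=
    ⟨by simp [Measure.restrict_apply, Real.volume_Ioc, ENNReal.ofReal_lt_top]⟩
  have hfinmap : IsFiniteMeasure (Measure.map (qfS T) (volume.restrict (Set.Ioc (0:ℝ) m))) := by
    constructor
    rw [Measure.map_apply (qfS_measurable hT1) MeasurableSet.univ]
    simp only [Set.preimage_univ]
    simp [Measure.restrict_apply, Real.volume_Ioc, ENNReal.ofReal_lt_top]
  refine Measure.ext_of_Iic _ _ (fun x => ?_)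
  rw [Measure.map_apply (qfS_measurable hT1) measurableSet_Iic,
    Measure.restrict_apply (qfS_measurable hT1 measurableSet_Iic),
    Measure.restrict_apply measurableSet_Iic]
  have hkey : qfS T ⁻¹' Set.Iic x ∩ Set.Ioc 0 m = Set.Ioc 0 (cdfS T x) := by
    ext y
    simp only [Set.mem_inter_iff, Set.mem_preimage, Set.mem_Iic, Set.mem_Ioc]
    constructor
    · rintro ⟨h, hy0, hym⟩
      exact ⟨hy0, (qfS_le_iff hT1 hy0 hym).1 h⟩
    · rintro ⟨hy0, hyc⟩
      have hym : y ≤ m := le_trans hyc (cdfS_le hT1 x)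
      exact ⟨(qfS_le_iff hT1 hy0 hym).2 hyc, hy0, hym⟩
  rw [hkey, Real.volume_Ioc, sub_zero, Set.inter_comm, vol_eq_ofReal_cdfS hT1]

include hT hT1 in
lemma qfS_ae_mem : ∀ᵐ y ∂(volume.restrict (Set.Ioc 0 (volume T).toReal)), qfS T y ∈ T := by
  have h0 : (Measure.map (qfS T) (volume.restrict (Set.Ioc 0 (volume T).toReal))) Tᶜ = 0 := by
    rw [map_qfS hT hT1, Measure.restrict_apply hT.compl]
    simp
  rw [Measure.map_apply (qfS_measurable hT1) hT.compl] at h0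
  rw [ae_iff]
  convert h0 using 2
  rfl
end QF

open Classical in
noncomputable def swapFn (S T : Set ℝ) (x : ℝ) : ℝ :=
  if x ∈ S then qfS T (cdfS S x) else if x ∈ T then qfS S (cdfS T x) else x

section Swap
variable {S T : Set ℝ} (hS : MeasurableSet S) (hT : MeasurableSet T)
  (hS1 : S ⊆ Set.Icc 0 1) (hT1 : T ⊆ Set.Icc 0 1) (hST : Disjoint S T)
  (hvol : volume S = volume T)

include hS hT hS1 hT1 in
lemma swapFn_measurable : Measurable (swapFn S T) := by
  unfold swapFn
  exact Measurable.ite hS ((qfS_measurable hT1).comp (cdfS_measurable hS1))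
    (Measurable.ite hT ((qfS_measurable hS1).comp (cdfS_measurable hT1)) measurable_id)

include hS1 hT1 in
lemma swapFn_mem_Icc {x : ℝ} (hx : x ∈ Set.Icc (0:ℝ) 1) : swapFn S T x ∈ Set.Icc (0:ℝ) 1 := by
  unfold swapFn
  split_ifs
  · exact qfS_mem_Icc hT1 _
  · exact qfS_mem_Icc hS1 _
  · exact hx

lemma swapFn_eq_self {x : ℝ} (hxS : x ∉ S) (hxT : x ∉ T) : swapFn S T x = x := by
  unfold swapFn; rw [if_neg hxS, if_neg hxT]

include hS hT hS1 hT1 hvol in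
lemma map_qc : Measure.map (fun x => qfS T (cdfS S x)) (volume.restrict S)
    = volume.restrict T := by
  have h1 : (fun x => qfS T (cdfS S x)) = (qfS T) ∘ (cdfS S) := rfl
  rw [h1, ← Measure.map_map (qfS_measurable hT1) (cdfS_measurable hS1),
    map_cdfS hS hS1, hvol, map_qfS hT hT1]

include hS hT hS1 hT1 hvol in
lemma qc_ae_mem : ∀ᵐ x ∂(volume.restrict S), qfS T (cdfS S x) ∈ T := by
  have h1 := qfS_ae_mem hT hT1
  rw [← hvol, ← map_cdfS hS hS1] at h1
  rw [MeasureTheory.ae_map_iff (cdfS_measurable hS1).aemeasurable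
    (hT.preimage (qfS_measurable hT1))] at h1
  exact h1

include hS hT hS1 hT1 hST in
lemma swapFn_ae_eq_S : swapFn S T =ᵐ[volume.restrict S] fun x => qfS T (cdfS S x) := by
  filter_upwards [ae_restrict_mem hS] with x hx
  unfold swapFn; rw [if_pos hx]

include hS hT hS1 hT1 hST in
lemma swapFn_ae_eq_T : swapFn S T =ᵐ[volume.restrict T] fun x => qfS S (cdfS T x) := by
  filter_upwards [ae_restrict_mem hT] with x hx
  unfold swapFn
  rw [if_neg (Set.disjoint_right.1 hST hx), if_pos hx]

include hS hT hS1 hT1 hST hvol in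
lemma swapFn_ae_mem_S : ∀ᵐ x ∂(volume.restrict S), swapFn S T x ∈ T := by
  filter_upwards [swapFn_ae_eq_S hS hT hS1 hT1 hST, qc_ae_mem hS hT hS1 hT1 hvol] with x h1 h2
  rw [h1]; exact h2

include hS hT hS1 hT1 hST hvol in
lemma map_swapFn : Measure.map (swapFn S T) (volume.restrict (Set.Icc 0 1))
    = volume.restrict (Set.Icc 0 1) := by
  have hsub : S ∪ T ⊆ Set.Icc (0:ℝ) 1 := Set.union_subset hS1 hT1
  set R : Set ℝ := Set.Icc 0 1 \ (S ∪ T) with hR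
  have hRmeas : MeasurableSet R := measurableSet_Icc.diff (hS.union hT)
  have hdecomp : volume.restrict (Set.Icc (0:ℝ) 1)
      = volume.restrict S + volume.restrict T + volume.restrict R := by
    have h1 : Set.Icc (0:ℝ) 1 = (S ∪ T) ∪ R := (Set.union_diff_cancel hsub).symm
    rw [h1, Measure.restrict_union disjoint_sdiff_right hRmeas,
      Measure.restrict_union hST hT]
  have hmeas : Measurable (swapFn S T) := swapFn_measurable hS hT hS1 hT1
  rw [hdecomp, Measure.map_add _ _ hmeas, Measure.map_add _ _ hmeas]
  rw [Measure.map_congr (swapFn_ae_eq_S hS hT hS1 hT1 hST),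
    Measure.map_congr (swapFn_ae_eq_T hS hT hS1 hT1 hST)]
  have hmapR : Measure.map (swapFn S T) (volume.restrict R) = volume.restrict R := by
    have : swapFn S T =ᵐ[volume.restrict R] id := by
      filter_upwards [ae_restrict_mem hRmeas] with x hx
      exact swapFn_eq_self (fun h => hx.2 (Or.inl h)) (fun h => hx.2 (Or.inr h))
    rw [Measure.map_congr this, Measure.map_id]
  rw [hmapR, map_qc hS hT hS1 hT1 hvol, map_qc hT hS hT1 hS1 hvol.symm]
  abel
end Swap

section SwapSubtype
variable {S T : Set ℝ} (hS : MeasurableSet S) (hT : MeasurableSet T)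
  (hS1 : S ⊆ Set.Icc 0 1) (hT1 : T ⊆ Set.Icc 0 1) (hST : Disjoint S T)
  (hvol : volume S = volume T)

noncomputable def swapMap (hS1 : S ⊆ Set.Icc 0 1) (hT1 : T ⊆ Set.Icc 0 1)
    (x : Set.Icc (0:ℝ) 1) : Set.Icc (0:ℝ) 1 :=
  ⟨swapFn S T ↑x, swapFn_mem_Icc hS1 hT1 x.2⟩

include hS hT hST hvol in
lemma measurePreserving_swapMap :
    MeasurePreserving (swapMap hS1 hT1) (volume : Measure (Set.Icc (0:ℝ) 1)) volume := by
  have hmeas : Measurable (swapFn S T) := swapFn_measurable hS hT hS1 hT1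
  have hσmeas : Measurable (swapMap hS1 hT1) :=
    Measurable.subtype_mk (hmeas.comp measurable_subtype_coe)
  refine ⟨hσmeas, ?_⟩
  have hval : (Subtype.val ∘ swapMap hS1 hT1 : Set.Icc (0:ℝ) 1 → ℝ)
      = swapFn S T ∘ Subtype.val := rfl
  have h1 : Measure.map Subtype.val (Measure.map (swapMap hS1 hT1) volume)
      = Measure.map Subtype.val (volume : Measure (Set.Icc (0:ℝ) 1)) := by
    rw [Measure.map_map measurable_subtype_coe hσmeas, hval,
      ← Measure.map_map hmeas measurable_subtype_coe,
      MeasurableSet.map_coe_volume measurableSet_Icc,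
      map_swapFn hS hT hS1 hT1 hST hvol]
  have hemb : MeasurableEmbedding (Subtype.val : Set.Icc (0:ℝ) 1 → ℝ) :=
    MeasurableEmbedding.subtype_coe measurableSet_Icc
  have h2 := congrArg (Measure.comap (Subtype.val : Set.Icc (0:ℝ) 1 → ℝ)) h1
  rwa [hemb.comap_map, hemb.comap_map] at h2
end SwapSubtype

lemma exists_cdfS_eq {S : Set ℝ} (hS1 : S ⊆ Set.Icc 0 1) {y : ℝ} (hy : 0 ≤ y)
    (hym : y ≤ (volume S).toReal) : ∃ t, cdfS S t = y := by
  have hcont : ContinuousOn (cdfS S) (Set.Icc 0 1) := (cdfS_continuous hS1).continuousOn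
  have h := intermediate_value_Icc zero_le_one hcont
  rw [cdfS_zero hS1, cdfS_one hS1] at h
  obtain ⟨t, _, ht⟩ := h ⟨hy, hym⟩
  exact ⟨t, ht⟩

lemma coeFn_finset_sum {ι : Type*} [DecidableEq ι] (s : Finset ι)
    (f : ι → (Set.Icc (0:ℝ) 1 →ₘ[volume] ℝ)) :
    ⇑(∑ i ∈ s, f i) =ᵐ[volume] fun x => ∑ i ∈ s, f i x := by
  induction s using Finset.induction_on with
  | empty => simp only [Finset.sum_empty]; exact MeasureTheory.AEEqFun.coeFn_zero
  | insert a s' hnotmem ih =>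
    rw [Finset.sum_insert hnotmem]
    filter_upwards [MeasureTheory.AEEqFun.coeFn_add (f a) (∑ i ∈ s', f i), ih] with x h1 h2
    rw [h1]
    simp only [Pi.add_apply, h2, Finset.sum_insert hnotmem]

lemma const_of_levels {α : Type*} [MeasurableSpace α] (μ : Measure α) (hμ : μ Set.univ ≠ 0)
    (u : α → ℝ)
    (h : ∀ c : ℝ, μ {x | u x ≤ c} = 0 ∨ μ {x | c < u x} = 0) :
    ∃ c : ℝ, u =ᵐ[μ] fun _ => c := by
  set E : Set ℝ := {c | μ {x | u x ≤ c} = 0} with hE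
  have hdown : ∀ {c c' : ℝ}, c' ≤ c → c ∈ E → c' ∈ E := fun hle hc =>
    measure_mono_null (fun x hx => le_trans hx hle) hc
  have hne : E.Nonempty := by
    have huniv : (⋃ n : ℕ, {x | (-(n:ℝ)) < u x}) = Set.univ := by
      ext x; simp only [Set.mem_iUnion, Set.mem_setOf_eq, Set.mem_univ, iff_true]
      obtain ⟨n, hn⟩ := exists_nat_gt (-(u x)); exact ⟨n, by linarith⟩
    have h2 : ¬ (∀ n : ℕ, μ {x | (-(n:ℝ)) < u x} = 0) := by
      intro hall
      exact hμ (huniv ▸ measure_iUnion_null hall)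
    push_neg at h2; obtain ⟨n, hn⟩ := h2
    rcases h (-(n:ℝ)) with h0 | h0
    · exact ⟨-(n:ℝ), h0⟩
    · exact absurd h0 hn
  have hbdd : BddAbove E := by
    have huniv : (⋃ n : ℕ, {x | u x ≤ (n:ℝ)}) = Set.univ := by
      ext x; simp only [Set.mem_iUnion, Set.mem_setOf_eq, Set.mem_univ, iff_true]
      obtain ⟨n, hn⟩ := exists_nat_gt (u x); exact ⟨n, hn.le⟩
    have h2 : ¬ (∀ n : ℕ, μ {x | u x ≤ (n:ℝ)} = 0) := by
      intro hall
      exact hμ (huniv ▸ measure_iUnion_null hall)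
    push_neg at h2; obtain ⟨n, hn⟩ := h2
    refine ⟨(n:ℝ), fun c hc => ?_⟩
    by_contra hgt
    push_neg at hgt
    exact hn (hdown hgt.le hc)
  set c₀ : ℝ := sSup E with hc₀
  have hlt : μ {x | u x < c₀} = 0 := by
    have hsub : {x | u x < c₀} ⊆ ⋃ n : ℕ, {x | u x ≤ c₀ - 1/(n+1)} := by
      intro x hx
      simp only [Set.mem_setOf_eq] at hx
      simp only [Set.mem_iUnion, Set.mem_setOf_eq]
      obtain ⟨n, hn⟩ := exists_nat_one_div_lt (by linarith : (0:ℝ) < c₀ - u x)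
      exact ⟨n, by push_cast at hn ⊢; linarith⟩
    refine measure_mono_null hsub (measure_iUnion_null fun n => ?_)
    have hlt' : c₀ - 1/(n+1) < c₀ := by
      have : (0:ℝ) < 1/(n+1) := by positivity
      linarith
    obtain ⟨a, haE, hlta⟩ := exists_lt_of_lt_csSup hne hlt'
    exact hdown hlta.le haE
  have hgt : μ {x | c₀ < u x} = 0 := by
    have hsub : {x | c₀ < u x} ⊆ ⋃ n : ℕ, {x | c₀ + 1/(n+1) < u x} := by
      intro x hx
      simp only [Set.mem_setOf_eq] at hx
      simp only [Set.mem_iUnion, Set.mem_setOf_eq]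
      obtain ⟨n, hn⟩ := exists_nat_one_div_lt (by linarith : (0:ℝ) < u x - c₀)
      exact ⟨n, by push_cast at hn ⊢; linarith⟩
    refine measure_mono_null hsub (measure_iUnion_null fun n => ?_)
    rcases h (c₀ + 1/(n+1)) with h0 | h0
    · exfalso
      have hle := le_csSup hbdd h0
      have : (0:ℝ) < 1/(n+1) := by positivity
      rw [← hc₀] at hle
      linarith
    · exact h0
  refine ⟨c₀, ?_⟩
  rw [Filter.EventuallyEq, ae_iff]
  refine measure_mono_null (fun x hx => ?_) (measure_union_null hlt hgt)
  simp only [Set.mem_setOf_eq] at hx ⊢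
  rcases lt_or_gt_of_ne hx with h1 | h1
  · exact Or.inl h1
  · exact Or.inr h1

/-- If the rearrangements `u ∘ σ` of a measurable `u : [0,1] → ℝ`, over all
measure-preserving `σ : [0,1] → [0,1]`, span a finite-dimensional subspace of
`L⁰` (measurable functions mod a.e. equality), then `u` is constant a.e. -/
theorem stmt_7 (u : Set.Icc (0 : ℝ) 1 → ℝ) (hu : Measurable u)
    (hfin : FiniteDimensional ℝ (Submodule.span ℝ
      {v : Set.Icc (0 : ℝ) 1 →ₘ[volume] ℝ |
        ∃ σ : Set.Icc (0 : ℝ) 1 → Set.Icc (0 : ℝ) 1,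
          MeasurePreserving σ volume volume ∧ ⇑v =ᵐ[volume] u ∘ σ})) :
    ∃ c : ℝ, u =ᵐ[volume] fun _ => c := by
  classical
  by_cases hcase : ∀ c : ℝ, volume {x : Set.Icc (0:ℝ) 1 | u x ≤ c} = 0 ∨
      volume {x : Set.Icc (0:ℝ) 1 | c < u x} = 0
  · refine const_of_levels volume ?_ u hcase
    rw [measure_univ]; exact one_ne_zero
  exfalso
  push_neg at hcase
  obtain ⟨c, hA0, hB0⟩ := hcase
  set V := Submodule.span ℝ
      {v : Set.Icc (0 : ℝ) 1 →ₘ[volume] ℝ |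
        ∃ σ : Set.Icc (0 : ℝ) 1 → Set.Icc (0 : ℝ) 1,
          MeasurePreserving σ volume volume ∧ ⇑v =ᵐ[volume] u ∘ σ} with hV
  set N : ℕ := Module.finrank ℝ V + 1 with hN
  have hemb : MeasurableEmbedding (Subtype.val : Set.Icc (0:ℝ) 1 → ℝ) :=
    MeasurableEmbedding.subtype_coe measurableSet_Icc
  set A : Set ℝ := Subtype.val '' {x : Set.Icc (0:ℝ) 1 | u x ≤ c} with hA
  set B : Set ℝ := Subtype.val '' {x : Set.Icc (0:ℝ) 1 | c < u x} with hB
  have hAsub : MeasurableSet {x : Set.Icc (0:ℝ) 1 | u x ≤ c} := hu measurableSet_Iic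
  have hBsub : MeasurableSet {x : Set.Icc (0:ℝ) 1 | c < u x} := hu measurableSet_Ioi
  have hAm : MeasurableSet A := hemb.measurableSet_image' hAsub
  have hBm : MeasurableSet B := hemb.measurableSet_image' hBsub
  have hA1 : A ⊆ Set.Icc 0 1 := by rintro z ⟨x, _, rfl⟩; exact x.2
  have hB1 : B ⊆ Set.Icc 0 1 := by rintro z ⟨x, _, rfl⟩; exact x.2
  have hABdisj : Disjoint A B := by
    refine Set.disjoint_image_of_injective Subtype.val_injective ?_
    rw [Set.disjoint_left]
    intro x hx hx'
    simp only [Set.mem_setOf_eq] at hx hx'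
    linarith
  have hvolA : volume A = volume {x : Set.Icc (0:ℝ) 1 | u x ≤ c} :=
    volume_image_subtype_coe measurableSet_Icc _
  have hvolB : volume B = volume {x : Set.Icc (0:ℝ) 1 | c < u x} :=
    volume_image_subtype_coe measurableSet_Icc _
  have hAne : volume A ≠ 0 := hvolA ▸ hA0
  have hBne : volume B ≠ 0 := hvolB ▸ hB0
  have hAfin : volume A ≠ ⊤ := by
    refine ne_top_of_le_ne_top ?_ (measure_mono hA1)
    simp [Real.volume_Icc]
  have hBfin : volume B ≠ ⊤ := by
    refine ne_top_of_le_ne_top ?_ (measure_mono hB1)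
    simp [Real.volume_Icc]
  set a : ℝ := (volume A).toReal with ha
  set b : ℝ := (volume B).toReal with hb
  have hapos : 0 < a := ENNReal.toReal_pos hAne hAfin
  have hbpos : 0 < b := ENNReal.toReal_pos hBne hBfin
  set ε : ℝ := min (a / N) b with hε
  have hNpos : 0 < (N:ℝ) := by positivity
  have hεpos : 0 < ε := lt_min (by positivity) hbpos
  have hNε : (N:ℝ) * ε ≤ a := by
    have : ε ≤ a / N := min_le_left _ _
    rw [le_div_iff₀ hNpos] at this
    linarith [this]
  -- choose points t i with cdfS A (t i) = min (i*ε) (N*ε)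
  have hch : ∀ i : ℕ, ∃ t, cdfS A t = min ((i:ℝ)*ε) ((N:ℝ)*ε) := by
    intro i
    refine exists_cdfS_eq hA1 (le_min (by positivity) (by positivity)) ?_
    exact le_trans (min_le_right _ _) hNε
  choose t ht using hch
  have htval : ∀ i : ℕ, i ≤ N → cdfS A (t i) = (i:ℝ)*ε := by
    intro i hi
    rw [ht i, min_eq_left]
    exact mul_le_mul_of_nonneg_right (Nat.cast_le.2 hi) hεpos.le
  have htmono : ∀ i j : ℕ, i ≤ N → j ≤ N → i < j → t i < t j := by
    intro i j hi hj hij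
    by_contra hle
    push_neg at hle
    have h1 := cdfS_mono hA1 hle
    rw [htval i hi, htval j hj] at h1
    have : (i:ℝ) < j := Nat.cast_lt.2 hij
    nlinarith
  set S : Fin N → Set ℝ := fun i => A ∩ Set.Ioc (t i) (t (i+1)) with hSdef
  have hSm : ∀ i, MeasurableSet (S i) := fun i => hAm.inter measurableSet_Ioc
  have hS1 : ∀ i, S i ⊆ Set.Icc 0 1 := fun i => fun z hz => hA1 hz.1
  have hSsubA : ∀ i, S i ⊆ A := fun i => Set.inter_subset_left
  have hSvol : ∀ i : Fin N, volume (S i) = ENNReal.ofReal ε := by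
    intro i
    have hi1 : (i:ℕ) ≤ N := i.isLt.le
    have hi2 : (i:ℕ)+1 ≤ N := i.isLt
    have hts : t (i:ℕ) ≤ t ((i:ℕ)+1) := (htmono _ _ hi1 hi2 (Nat.lt_succ_self _)).le
    have hsplit : A ∩ Set.Iic (t ((i:ℕ)+1)) =
        (A ∩ Set.Iic (t (i:ℕ))) ∪ (A ∩ Set.Ioc (t (i:ℕ)) (t ((i:ℕ)+1))) := by
      ext z
      simp only [Set.mem_inter_iff, Set.mem_Iic, Set.mem_union, Set.mem_Ioc]
      constructor
      · rintro ⟨hz, hzle⟩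
        rcases le_or_gt z (t (i:ℕ)) with h | h
        · exact Or.inl ⟨hz, h⟩
        · exact Or.inr ⟨hz, h, hzle⟩
      · rintro (⟨hz, h⟩ | ⟨hz, _, h⟩)
        · exact ⟨hz, le_trans h hts⟩
        · exact ⟨hz, h⟩
    have hdisj2 : Disjoint (A ∩ Set.Iic (t (i:ℕ))) (A ∩ Set.Ioc (t (i:ℕ)) (t ((i:ℕ)+1))) := by
      rw [Set.disjoint_left]
      rintro z ⟨_, hz1⟩ ⟨_, hz2, _⟩
      simp only [Set.mem_Iic] at hz1
      linarith
    have hadd := measure_union (μ := volume) hdisj2 (hAm.inter measurableSet_Ioc)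
    rw [← hsplit] at hadd
    rw [vol_eq_ofReal_cdfS hA1, vol_eq_ofReal_cdfS hA1, htval _ hi1, htval _ hi2] at hadd
    have hεc : ((((i:ℕ)+1):ℕ):ℝ) * ε = ((i:ℕ):ℝ)*ε + ε := by push_cast; ring
    rw [hεc, ENNReal.ofReal_add (by positivity) hεpos.le] at hadd
    exact ((ENNReal.add_right_inj (a := ENNReal.ofReal (((i:ℕ):ℝ)*ε))
      (b := ENNReal.ofReal ε) (c := volume (S i)) ENNReal.ofReal_ne_top).1 hadd).symm
  have hSdisj : ∀ i j : Fin N, i ≠ j → Disjoint (S i) (S j) := by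
    intro i j hij
    rcases Ne.lt_or_gt hij with h | h
    all_goals {
      rw [Set.disjoint_left]
      rintro z ⟨_, hz1⟩ ⟨_, hz2⟩
      simp only [Set.mem_Ioc] at hz1 hz2
      first
      | · have hle : t ((i:ℕ)+1) ≤ t (j:ℕ) := by
            rcases Nat.lt_or_ge ((i:ℕ)+1) (j:ℕ) with h' | h'
            · exact (htmono _ _ i.isLt j.isLt.le h').le
            · have : (i:ℕ)+1 = (j:ℕ) := le_antisymm (Nat.succ_le_of_lt (Fin.lt_def.1 h)) h'
              rw [this]
          linarith [hz1.2, hz2.1]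
      | · have hle : t ((j:ℕ)+1) ≤ t (i:ℕ) := by
            rcases Nat.lt_or_ge ((j:ℕ)+1) (i:ℕ) with h' | h'
            · exact (htmono _ _ j.isLt i.isLt.le h').le
            · have : (j:ℕ)+1 = (i:ℕ) := le_antisymm (Nat.succ_le_of_lt (Fin.lt_def.1 h)) h'
              rw [this]
          linarith [hz1.1, hz2.2]
    }
  -- construct T
  obtain ⟨s0, hs0⟩ := exists_cdfS_eq hB1 hεpos.le (min_le_right _ _)
  set T : Set ℝ := B ∩ Set.Iic s0 with hTdef
  have hTm : MeasurableSet T := hBm.inter measurableSet_Iic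
  have hT1 : T ⊆ Set.Icc 0 1 := fun z hz => hB1 hz.1
  have hTsubB : T ⊆ B := Set.inter_subset_left
  have hTvol : volume T = ENNReal.ofReal ε := by
    rw [hTdef, vol_eq_ofReal_cdfS hB1, hs0]
  have hSTdisj : ∀ i, Disjoint (S i) T :=
    fun i => hABdisj.mono (hSsubA i) hTsubB
  have hvolST : ∀ i, volume (S i) = volume T := fun i => by rw [hSvol i, hTvol]
  set σ : Fin N → (Set.Icc (0:ℝ) 1 → Set.Icc (0:ℝ) 1) :=
    fun i => swapMap (hS1 i) hT1 with hσ
  have hmp : ∀ i, MeasurePreserving (σ i) volume volume :=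
    fun i => measurePreserving_swapMap (hSm i) hTm (hS1 i) hT1 (hSTdisj i) (hvolST i)
  have hsm : AEStronglyMeasurable u (volume : Measure (Set.Icc (0:ℝ) 1)) :=
    hu.aestronglyMeasurable
  set w : Set.Icc (0:ℝ) 1 →ₘ[volume] ℝ := AEEqFun.mk u hsm with hw
  have hwmem : w ∈ {v : Set.Icc (0 : ℝ) 1 →ₘ[volume] ℝ |
      ∃ σ' : Set.Icc (0 : ℝ) 1 → Set.Icc (0 : ℝ) 1,
        MeasurePreserving σ' volume volume ∧ ⇑v =ᵐ[volume] u ∘ σ'} :=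
    ⟨id, MeasurePreserving.id _, by simpa using AEEqFun.coeFn_mk u hsm⟩
  set wi : Fin N → (Set.Icc (0:ℝ) 1 →ₘ[volume] ℝ) :=
    fun i => AEEqFun.mk (u ∘ σ i)
      ((hu.comp (hmp i).measurable).aestronglyMeasurable) with hwi
  have hwimem : ∀ i, wi i ∈ {v : Set.Icc (0 : ℝ) 1 →ₘ[volume] ℝ |
      ∃ σ' : Set.Icc (0 : ℝ) 1 → Set.Icc (0 : ℝ) 1,
        MeasurePreserving σ' volume volume ∧ ⇑v =ᵐ[volume] u ∘ σ'} :=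
    fun i => ⟨σ i, hmp i, AEEqFun.coeFn_mk _ _⟩
  set F : Fin N → (Set.Icc (0:ℝ) 1 →ₘ[volume] ℝ) := fun i => wi i - w with hF
  have hFmem : ∀ i, F i ∈ V := fun i =>
    sub_mem (Submodule.subset_span (hwimem i)) (Submodule.subset_span hwmem)
  have hLI : LinearIndependent ℝ (fun i : Fin N => (⟨F i, hFmem i⟩ : V)) := by
    apply LinearIndependent.of_comp V.subtype
    have hcomp : (⇑V.subtype ∘ fun i : Fin N => (⟨F i, hFmem i⟩ : V)) = F := rfl
    rw [hcomp, Fintype.linearIndependent_iff]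
    intro g hg i
    have hFco : ∀ m : Fin N, ⇑(F m) =ᵐ[volume] fun x => u (σ m x) - u x := by
      intro m
      filter_upwards [AEEqFun.coeFn_sub (wi m) w, AEEqFun.coeFn_mk (u ∘ σ m)
        ((hu.comp (hmp m).measurable).aestronglyMeasurable),
        AEEqFun.coeFn_mk u hsm] with x h1 h2 h3
      rw [hF]
      simp only []
      rw [h1]
      simp only [Pi.sub_apply]
      rw [h2, h3]
      rfl
    have hae : ∀ᵐ x ∂(volume : Measure (Set.Icc (0:ℝ) 1)),
        ∑ m : Fin N, g m * (u (σ m x) - u x) = 0 := by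
      have h0 : ⇑(∑ m : Fin N, g m • F m) =ᵐ[volume]
          (0 : Set.Icc (0:ℝ) 1 → ℝ) := by
        rw [hg]; exact AEEqFun.coeFn_zero
      have hall : ∀ᵐ x ∂(volume : Measure (Set.Icc (0:ℝ) 1)),
          ∀ m : Fin N, (g m • F m) x = g m * (u (σ m x) - u x) := by
        rw [ae_all_iff]
        intro m
        filter_upwards [AEEqFun.coeFn_smul (g m) (F m), hFco m] with x h1 h2
        rw [h1]
        simp only [Pi.smul_apply, smul_eq_mul]
        rw [h2]
      filter_upwards [coeFn_finset_sum Finset.univ (fun m => g m • F m), h0, hall]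
        with x h1 h2 h3
      calc ∑ m : Fin N, g m * (u (σ m x) - u x)
          = ∑ m : Fin N, (g m • F m) x := by
            refine Finset.sum_congr rfl (fun m _ => (h3 m).symm)
        _ = (∑ m : Fin N, g m • F m) x := h1.symm
        _ = 0 := h2
    -- membership a.e.
    have hswapmeas : Measurable (swapFn (S i) T) :=
      swapFn_measurable (hSm i) hTm (hS1 i) hT1
    have hmem0 : volume ({z : ℝ | ¬ swapFn (S i) T z ∈ T} ∩ S i) = 0 := by
      have h := swapFn_ae_mem_S (hSm i) hTm (hS1 i) hT1 (hSTdisj i) (hvolST i)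
      have hms : MeasurableSet {z : ℝ | ¬ swapFn (S i) T z ∈ T} := hswapmeas hTm.compl
      rw [ae_iff, Measure.restrict_apply hms] at h
      exact h
    have hmemae : ∀ᵐ (x : Set.Icc (0:ℝ) 1) ∂volume,
        ¬((x:ℝ) ∈ S i ∧ ¬ swapFn (S i) T (x:ℝ) ∈ T) := by
      rw [ae_iff]
      have hset : {x : Set.Icc (0:ℝ) 1 | ¬ ¬((x:ℝ) ∈ S i ∧ ¬ swapFn (S i) T (x:ℝ) ∈ T)}
          = {x : Set.Icc (0:ℝ) 1 | (x:ℝ) ∈ S i ∧ ¬ swapFn (S i) T (x:ℝ) ∈ T} := by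
        ext x; simp only [Set.mem_setOf_eq, not_not]
      rw [hset]
      have him : volume (Subtype.val ''
          {x : Set.Icc (0:ℝ) 1 | (x:ℝ) ∈ S i ∧ ¬ swapFn (S i) T (x:ℝ) ∈ T})
          ≤ volume ({z : ℝ | ¬ swapFn (S i) T z ∈ T} ∩ S i) := by
        apply measure_mono
        rintro z ⟨x, ⟨hx1, hx2⟩, rfl⟩
        exact ⟨hx2, hx1⟩
      rw [volume_image_subtype_coe measurableSet_Icc] at him
      rw [hmem0] at him
      exact le_antisymm him zero_le
    set P : Set (Set.Icc (0:ℝ) 1) := Subtype.val ⁻¹' (S i) with hP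
    have hPmeas : MeasurableSet P := measurable_subtype_coe (hSm i)
    have hPvol : volume P ≠ 0 := by
      rw [hP, volume_preimage_coe measurableSet_Icc.nullMeasurableSet (hSm i),
        Set.inter_eq_self_of_subset_left (hS1 i), hSvol i]
      exact fun h => absurd (ENNReal.ofReal_eq_zero.1 h) (not_le.2 hεpos)
    have hPrpos : (volume : Measure (Set.Icc (0:ℝ) 1)).restrict P ≠ 0 := by
      intro h0
      apply hPvol
      rw [← Measure.restrict_apply_univ, h0]
      simp
    haveI : (ae ((volume : Measure (Set.Icc (0:ℝ) 1)).restrict P)).NeBot :=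
      ae_neBot.2 hPrpos
    have h1 := ae_restrict_of_ae (s := P) hae
    have h2 := ae_restrict_of_ae (s := P) hmemae
    have h3 := ae_restrict_mem (μ := (volume : Measure (Set.Icc (0:ℝ) 1))) hPmeas
    obtain ⟨x, ⟨hx1, hx2⟩, hx3⟩ := ((h1.and h2).and h3).exists
    have hx3' : (x:ℝ) ∈ S i := hx3
    have hswap : swapFn (S i) T (x:ℝ) ∈ T := by
      by_contra hns
      exact hx2 ⟨hx3', hns⟩
    have huxle : u x ≤ c := by
      obtain ⟨y, hy, hyval⟩ := hSsubA i hx3'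
      have hyx : y = x := Subtype.ext hyval
      rw [← hyx]; exact hy
    have huσ : c < u (σ i x) := by
      obtain ⟨y, hy, hyval⟩ := hTsubB hswap
      have hσx : σ i x = y := Subtype.ext hyval.symm
      rw [hσx]; exact hy
    have hterms : ∀ m : Fin N, m ≠ i → u (σ m x) - u x = 0 := by
      intro m hm
      have hn1 : (x:ℝ) ∉ S m := fun hmem =>
        (Set.disjoint_left.1 (hSdisj m i hm)) hmem hx3'
      have hn2 : (x:ℝ) ∉ T := fun hmem =>
        (Set.disjoint_left.1 (hSTdisj i)) hx3' hmem
      have hfix : σ m x = x := Subtype.ext (swapFn_eq_self hn1 hn2)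
      rw [hfix]; ring
    have hsum2 : ∑ m : Fin N, g m * (u (σ m x) - u x) = g i * (u (σ i x) - u x) := by
      refine Finset.sum_eq_single_of_mem i (Finset.mem_univ i) (fun m _ hm => ?_)
      rw [hterms m hm]; ring
    rw [hsum2] at hx1
    rcases mul_eq_zero.1 hx1 with h | h
    · exact h
    · exfalso
      have : 0 < u (σ i x) - u x := by linarith
      linarith
  have hcard := hLI.fintype_card_le_finrank
  rw [Fintype.card_fin] at hcard
  omega
end

section
/- Let μ be a nonatomic finite measure, X an order-continuous Köthe function space on (Ω, μ), and suppose P : X → X is a projection of norm 1 onto a subspace of finite codimension n, with Q = I − P = ∑_{j=1}^n f_j ⊗ u_j (f_j ∈ X* linearly independent, u_j ∈ X linearly independent). Then for every x ∈ X, every norming x* ∈ X* for x (identified with a measurable function), and every measurable h with |h| = 1 a.e.: ∑_{j=1}^n (∫ f_j h x dμ)(∫ u_j h x* dμ) ≥ 0. -/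
open MeasureTheory

/-- An (order-continuous) Köthe function space on `(Ω, μ)`: a normed ideal lattice of
measurable functions, modeled by a membership predicate and a norm. -/
structure KotheSpace {Ω : Type*} [MeasurableSpace Ω] (μ : Measure Ω) where
  Mem : (Ω → ℝ) → Prop
  norm : (Ω → ℝ) → ℝ
  measurable_of_mem : ∀ f, Mem f → Measurable f
  zero_mem : Mem 0
  add_mem : ∀ f g, Mem f → Mem g → Mem (f + g)
  smul_mem : ∀ (c : ℝ) f, Mem f → Mem (c • f)
  norm_nonneg : ∀ f, Mem f → 0 ≤ norm f
  norm_eq_zero_iff : ∀ f, Mem f → (norm f = 0 ↔ f =ᵐ[μ] 0)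
  norm_add_le : ∀ f g, Mem f → Mem g → norm (f + g) ≤ norm f + norm g
  norm_smul : ∀ (c : ℝ) f, Mem f → norm (c • f) = |c| * norm f
  ideal_mem : ∀ f g, Measurable f → Mem g → (∀ᵐ ω ∂μ, |f ω| ≤ |g ω|) → Mem f
  ideal_norm_le : ∀ f g, Mem f → Mem g → (∀ᵐ ω ∂μ, |f ω| ≤ |g ω|) → norm f ≤ norm g
  order_continuous : ∀ f : ℕ → Ω → ℝ, (∀ k, Mem (f k)) →
    (∀ᵐ ω ∂μ, ∀ k, 0 ≤ f (k + 1) ω ∧ f (k + 1) ω ≤ f k ω) →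
    (∀ᵐ ω ∂μ, Filter.Tendsto (fun k => f k ω) Filter.atTop (nhds 0)) →
    Filter.Tendsto (fun k => norm (f k)) Filter.atTop (nhds 0)

/-- `xs` (a measurable function, identified with a functional via integral duality)
is a norming functional for `x ∈ X`: it has dual norm at most one and attains `‖x‖`
at `x`. -/
def IsNormingFunctional {Ω : Type*} [MeasurableSpace Ω] {μ : Measure Ω}
    (X : KotheSpace μ) (x xs : Ω → ℝ) : Prop :=
  Measurable xs ∧
    (∀ y, X.Mem y → Integrable (fun ω => y ω * xs ω) μ ∧
      (∫ ω, y ω * xs ω ∂μ) ≤ X.norm y) ∧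
    (∫ ω, x ω * xs ω ∂μ) = X.norm x

/-- Let `X` be an order-continuous Köthe function space over a nonatomic finite
measure, and `P` a norm-one projection of `X` onto a subspace of codimension `n`,
with complementary projection `Q = I - P = ∑_{j=1}^n f_j ⊗ u_j` (the `f_j ∈ X*`
linearly independent, the `u_j ∈ X` linearly independent). Then for every `x ∈ X`,
every norming functional `x*` for `x`, and every measurable `h` with `|h| = 1` a.e.,
`∑_j (∫ f_j h x dμ)(∫ u_j h x* dμ) ≥ 0`. -/
theorem stmt_14 {Ω : Type*} [MeasurableSpace Ω] (μ : Measure Ω)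
    [IsFiniteMeasure μ] [NullSingletonClass μ] (X : KotheSpace μ) (n : ℕ)
    (P : (Ω → ℝ) → (Ω → ℝ)) (hPlin : IsLinearMap ℝ P)
    (hPmem : ∀ x, X.Mem x → X.Mem (P x))
    (hPproj : ∀ x, X.Mem x → P (P x) = P x)
    (hPnorm : ∀ x, X.Mem x → X.norm (P x) ≤ X.norm x)  -- `‖P‖ = 1`
    (f u : Fin n → Ω → ℝ)
    (hf_meas : ∀ j, Measurable (f j))
    (hf_int : ∀ j x, X.Mem x → Integrable (fun ω => f j ω * x ω) μ)
    (hu_mem : ∀ j, X.Mem (u j))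
    (hf_ind : LinearIndependent ℝ f) (hu_ind : LinearIndependent ℝ u)
    (hQ : ∀ x, X.Mem x → ∀ ω,
      x ω - P x ω = ∑ j : Fin n, (∫ ω', f j ω' * x ω' ∂μ) * u j ω)
    (x xs : Ω → ℝ) (hx : X.Mem x) (hxs : IsNormingFunctional X x xs)
    (h : Ω → ℝ) (hh_meas : Measurable h) (hh : ∀ᵐ ω ∂μ, |h ω| = 1) :
    0 ≤ ∑ j : Fin n,
        (∫ ω, f j ω * (h ω * x ω) ∂μ) * (∫ ω, u j ω * (h ω * xs ω) ∂μ) := by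
  obtain ⟨hxs_meas, hxs_dual, hxs_att⟩ := hxs
  set y : Ω → ℝ := fun ω => h ω * x ω with hy_def
  have habs : ∀ z : Ω → ℝ, ∀ᵐ ω ∂μ, |h ω * z ω| = |z ω| := by
    intro z
    filter_upwards [hh] with ω hω
    rw [abs_mul, hω, one_mul]
  have hmem : ∀ z, X.Mem z → X.Mem (fun ω => h ω * z ω) := by
    intro z hz
    exact X.ideal_mem _ z (hh_meas.mul (X.measurable_of_mem z hz)) hz
      ((habs z).mono fun ω e => le_of_eq e)
  have hnorm : ∀ z, X.Mem z → X.norm (fun ω => h ω * z ω) = X.norm z := by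
    intro z hz
    refine le_antisymm ?_ ?_
    · exact X.ideal_norm_le _ z (hmem z hz) hz ((habs z).mono fun ω e => le_of_eq e)
    · exact X.ideal_norm_le z _ hz (hmem z hz) ((habs z).mono fun ω e => le_of_eq e.symm)
  have hy_mem : X.Mem y := hmem x hx
  have hint : ∀ z, X.Mem z → Integrable (fun ω => z ω * (h ω * xs ω)) μ := by
    intro z hz
    have h1 := (hxs_dual _ (hmem z hz)).1
    have heq : (fun ω => z ω * (h ω * xs ω)) = fun ω => (h ω * z ω) * xs ω := by
      funext ω; ring
    rw [heq]; exact h1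
  have hbound : ∀ z, X.Mem z → (∫ ω, z ω * (h ω * xs ω) ∂μ) ≤ X.norm z := by
    intro z hz
    have h2 := (hxs_dual _ (hmem z hz)).2
    have heq : (fun ω => z ω * (h ω * xs ω)) = fun ω => (h ω * z ω) * xs ω := by
      funext ω; ring
    calc (∫ ω, z ω * (h ω * xs ω) ∂μ) = ∫ ω, (h ω * z ω) * xs ω ∂μ := by rw [heq]
      _ ≤ X.norm (fun ω => h ω * z ω) := h2
      _ = X.norm z := hnorm z hz
  have hatt : (∫ ω, y ω * (h ω * xs ω) ∂μ) = X.norm y := by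
    have heq : (fun ω => y ω * (h ω * xs ω)) =ᵐ[μ] fun ω => x ω * xs ω := by
      filter_upwards [hh] with ω hω
      have h2 : h ω * h ω = 1 := by
        rw [← abs_mul_abs_self, hω]; ring
      simp only [hy_def]
      linear_combination (x ω * xs ω) * h2
    rw [integral_congr_ae heq, hxs_att, hnorm x hx]
  have hPy_mem : X.Mem (P y) := hPmem y hy_mem
  -- the sum equals an integral
  have hsum : ∑ j : Fin n,
      (∫ ω, f j ω * (h ω * x ω) ∂μ) * (∫ ω, u j ω * (h ω * xs ω) ∂μ)
      = ∫ ω, (∑ j : Fin n, (∫ ω', f j ω' * y ω' ∂μ) * u j ω) * (h ω * xs ω) ∂μ := by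
    have hint_j : ∀ j : Fin n, Integrable
        (fun ω => ((∫ ω', f j ω' * y ω' ∂μ) * u j ω) * (h ω * xs ω)) μ := by
      intro j
      have := ((hint (u j) (hu_mem j)).const_mul (∫ ω', f j ω' * y ω' ∂μ))
      refine this.congr (Filter.Eventually.of_forall fun ω => ?_)
      ring
    rw [show (fun ω => (∑ j : Fin n, (∫ ω', f j ω' * y ω' ∂μ) * u j ω) * (h ω * xs ω))
        = fun ω => ∑ j : Fin n, ((∫ ω', f j ω' * y ω' ∂μ) * u j ω) * (h ω * xs ω) from by
      funext ω; rw [Finset.sum_mul]]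
    rw [integral_finset_sum _ fun j _ => hint_j j]
    refine Finset.sum_congr rfl fun j _ => ?_
    have heq : (fun ω => ((∫ ω', f j ω' * y ω' ∂μ) * u j ω) * (h ω * xs ω))
        = fun ω => (∫ ω', f j ω' * y ω' ∂μ) * (u j ω * (h ω * xs ω)) := by
      funext ω; ring
    rw [heq, MeasureTheory.integral_const_mul]
  rw [hsum]
  have hQy : (fun ω => (∑ j : Fin n, (∫ ω', f j ω' * y ω' ∂μ) * u j ω) * (h ω * xs ω))
      = fun ω => y ω * (h ω * xs ω) - P y ω * (h ω * xs ω) := by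
    funext ω
    rw [← hQ y hy_mem ω]; ring
  rw [hQy, integral_sub (hint y hy_mem) (hint (P y) hPy_mem), hatt]
  have := hbound (P y) hPy_mem
  have := hPnorm y hy_mem
  linarith
end
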